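/- Let E be a real inner product space, λ ∈ ℝ, and f : E → ℝ a λ-concave continuously differentiable function. Let α, β : [0, ∞) → E be two f-gradient curves with α(0) = p and β(0) = q. Then for all t_p ≥ t_q ≥ 0, ‖α(t_p) − β(t_q)‖² ≤ e^{2λ·t_q}·[ ‖p − q‖² + (2·f(p) − 2·f(q) + λ·‖p − q‖²)·θ_λ(t_p − t_q) + ‖∇f(p)‖²·θ_λ(t_p − t_q)² ], where θ_λ(t) = t if λ = 0 and θ_λ(t) = (e^{λt} − 1)/λ if λ ≠ 0. -/

import Mathlib

open scoped RealInnerProductSpace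

/-- The function `θ_λ` of Lemma 2.4. -/
noncomputable def thetaLam (lam t : ℝ) : ℝ :=
  if lam = 0 then t else (Real.exp (lam * t) - 1) / lam

open Set Filter

lemma thetaLam_zero (lam : ℝ) : thetaLam lam 0 = 0 := by
  by_cases h : lam = 0 <;> simp [thetaLam, h]

lemma thetaLam_hasDerivAt (lam t : ℝ) : HasDerivAt (thetaLam lam) (Real.exp (lam * t)) t := by
  by_cases h : lam = 0
  · subst h
    have : thetaLam 0 = fun u => u := funext fun u => by simp [thetaLam]
    rw [this, zero_mul, Real.exp_zero]
    exact hasDerivAt_id t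
  · have h1 : HasDerivAt (fun u : ℝ => (Real.exp (lam * u) - 1) / lam)
        (Real.exp (lam * t) * (lam * 1) / lam) t :=
      (((hasDerivAt_id t).const_mul lam).exp.sub_const 1).div_const lam
    have h2 : Real.exp (lam * t) * (lam * 1) / lam = Real.exp (lam * t) := by
      field_simp
    rw [h2] at h1
    convert h1 using 1
    funext u
    simp [thetaLam, h]

lemma lam_mul_theta (lam t : ℝ) : lam * thetaLam lam t + 1 = Real.exp (lam * t) := by
  by_cases h : lam = 0
  · simp [thetaLam, h]
  · simp only [thetaLam, if_neg h]
    field_simp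
    ring

lemma theta_two_lam (lam t : ℝ) :
    thetaLam (2 * lam) t = thetaLam lam t * (lam * thetaLam lam t + 2) / 2 := by
  by_cases h : lam = 0
  · simp [thetaLam, h]
  · have h2 : (2 : ℝ) * lam ≠ 0 := mul_ne_zero two_ne_zero h
    simp only [thetaLam, if_neg h, if_neg h2]
    rw [show (2 : ℝ) * lam * t = lam * t + lam * t by ring, Real.exp_add]
    field_simp
    ring

lemma gronwall_aux {v v' : ℝ → ℝ} {δ K ε : ℝ}
    (hd : ∀ t ∈ Set.Ici (0 : ℝ), HasDerivWithinAt v (v' t) (Set.Ici 0) t)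
    (hb : ∀ t ∈ Set.Ici (0 : ℝ), v' t ≤ K * v t + ε)
    (h0 : v 0 ≤ δ) :
    ∀ t ∈ Set.Ici (0 : ℝ), v t ≤ gronwallBound δ K ε t := by
  intro t ht
  have H := le_gronwallBound_of_liminf_deriv_right_le (f := v) (f' := v') (δ := δ) (K := K)
    (ε := ε) (a := 0) (b := t)
    (fun x hx => ((hd x hx.1).continuousWithinAt).mono Icc_subset_Ici_self)
    (fun x hx r hr => by
      have := ((hd x hx.1).mono (Ici_subset_Ici.mpr hx.1)).liminf_right_slope_le hr
      exact this.mono fun z hz => by rwa [slope_def_field, div_eq_inv_mul] at hz)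
    h0 (fun x hx => hb x hx.1)
  have := H t ⟨ht, le_refl t⟩
  rwa [sub_zero] at this

section
variable {E : Type*} [NormedAddCommGroup E] [InnerProductSpace ℝ E]
  {lam : ℝ} {f : E → ℝ} {g : E → E}

lemma first_order (hconc : ConcaveOn ℝ Set.univ (fun x => f x - lam / 2 * ‖x‖ ^ 2))
    (hg : ∀ x, HasFDerivAt f (innerSL ℝ (g x)) x) (x y : E) :
    f y ≤ f x + ⟪g x, y - x⟫ + lam / 2 * ‖y - x‖ ^ 2 := by
  set F : E → ℝ := fun z => f z - lam / 2 * ‖z‖ ^ 2 with hF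
  set A := AffineMap.lineMap (k := ℝ) x y with hA
  have hφ : ConcaveOn ℝ Set.univ fun t : ℝ => F (A t) := by
    have := hconc.comp_affineMap A
    simp only [preimage_univ] at this
    exact this
  have hFd : HasFDerivAt F (innerSL ℝ (g x) - (lam / 2) • (2 • innerSL ℝ x)) x :=
    (hg x).sub ((hasStrictFDerivAt_norm_sq x).hasFDerivAt.const_mul (lam / 2))
  have hAd : HasDerivAt (fun t : ℝ => A t) (y - x) 0 := by
    have h1 : HasDerivAt (fun t : ℝ => t • (y - x) + x) ((1 : ℝ) • (y - x)) 0 :=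
      ((hasDerivAt_id (0 : ℝ)).smul_const (y - x)).add_const x
    rw [one_smul] at h1
    convert h1 using 1
    funext t; rw [hA, AffineMap.lineMap_apply, vsub_eq_sub, vadd_eq_add]
  have hA0 : A (0:ℝ) = x := AffineMap.lineMap_apply_zero x y
  have hD : HasDerivAt (fun t : ℝ => F (A t))
      ((innerSL ℝ (g x) - (lam / 2) • (2 • innerSL ℝ x)) (y - x)) 0 := by
    have hFd' : HasFDerivAt F (innerSL ℝ (g x) - (lam / 2) • (2 • innerSL ℝ x)) (A 0) := by
      rw [hA0]; exact hFd
    exact HasFDerivAt.comp_hasDerivAt (x := (0:ℝ)) (f := fun t : ℝ => A t) hFd' hAd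
  have hslope := (hφ.neg.le_slope_of_hasDerivAt (mem_univ (0:ℝ)) (mem_univ (1:ℝ))
    zero_lt_one hD.neg)
  rw [slope_def_field] at hslope
  have hA1 : A (1:ℝ) = y := AffineMap.lineMap_apply_one x y
  have hval : -((innerSL ℝ (g x) - (lam / 2) • (2 • innerSL ℝ x)) (y - x))
      ≤ -(F y) - -(F x) := by
    simpa [hA0, hA1] using hslope
  have hlin : (innerSL ℝ (g x) - (lam / 2) • (2 • innerSL ℝ x)) (y - x)
      = ⟪g x, y - x⟫ - lam * ⟪x, y - x⟫ := by
    simp [two_smul]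
    ring
  rw [hlin] at hval
  have hexp : ‖y - x‖ ^ 2 = ‖y‖ ^ 2 - 2 * ⟪x, y⟫ + ‖x‖ ^ 2 := by
    rw [norm_sub_sq_real, real_inner_comm]
  have hxy : ⟪x, y - x⟫ = ⟪x, y⟫ - ‖x‖ ^ 2 := by
    rw [inner_sub_right, real_inner_self_eq_norm_sq]
  simp only [hF] at hval
  rw [hxy] at hval
  rw [hexp]
  linarith

lemma grad_mono (hconc : ConcaveOn ℝ Set.univ (fun x => f x - lam / 2 * ‖x‖ ^ 2))
    (hg : ∀ x, HasFDerivAt f (innerSL ℝ (g x)) x) (x y : E) :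
    ⟪g x - g y, x - y⟫ ≤ lam * ‖x - y‖ ^ 2 := by
  have h1 := first_order hconc hg x y
  have h2 := first_order hconc hg y x
  have e1 : ⟪g x - g y, x - y⟫ = ⟪g x, x - y⟫ - ⟪g y, x - y⟫ := by
    rw [inner_sub_left]
  have e2 : ⟪g x, y - x⟫ = -⟪g x, x - y⟫ := by
    rw [show y - x = -(x - y) from (neg_sub x y).symm, inner_neg_right]
  have e3 : ‖y - x‖ = ‖x - y‖ := norm_sub_rev y x
  rw [e2, e3] at h1
  rw [e1]
  linarith

lemma curve_shift {α : ℝ → E} (hα : ∀ t ∈ Set.Ici (0:ℝ), HasDerivWithinAt α (g (α t)) (Set.Ici 0) t)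
    {s : ℝ} (hs : 0 ≤ s) :
    ∀ t ∈ Set.Ici (0:ℝ), HasDerivWithinAt (fun u => α (u + s)) (g (α (t + s))) (Set.Ici 0) t := by
  intro t ht
  have hts : t + s ∈ Set.Ici (0:ℝ) := add_nonneg ht hs
  have h1 : HasDerivWithinAt (fun u : ℝ => u + s) 1 (Set.Ici 0) t :=
    ((hasDerivAt_id t).add_const s).hasDerivWithinAt
  have h2 := HasDerivWithinAt.scomp (g₁ := α) (h := fun u : ℝ => u + s) (x := t)
    (hα (t + s) hts) h1 (fun u (hu : 0 ≤ u) => add_nonneg hu hs)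
  simpa [Function.comp_def] using h2

lemma same_time (hmono : ∀ x y : E, ⟪g x - g y, x - y⟫ ≤ lam * ‖x - y‖ ^ 2)
    {α β : ℝ → E}
    (hα : ∀ t ∈ Set.Ici (0:ℝ), HasDerivWithinAt α (g (α t)) (Set.Ici 0) t)
    (hβ : ∀ t ∈ Set.Ici (0:ℝ), HasDerivWithinAt β (g (β t)) (Set.Ici 0) t) :
    ∀ t ∈ Set.Ici (0:ℝ), ‖α t - β t‖ ^ 2 ≤ Real.exp (2 * lam * t) * ‖α 0 - β 0‖ ^ 2 := by
  intro t ht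
  have hd : ∀ u ∈ Set.Ici (0:ℝ), HasDerivWithinAt (fun r => ‖α r - β r‖ ^ 2)
      (2 * ⟪α u - β u, g (α u) - g (β u)⟫) (Set.Ici 0) u :=
    fun u hu => ((hα u hu).sub (hβ u hu)).norm_sq
  have hb : ∀ u ∈ Set.Ici (0:ℝ),
      2 * ⟪α u - β u, g (α u) - g (β u)⟫ ≤ (2 * lam) * ‖α u - β u‖ ^ 2 + 0 := by
    intro u _
    have := hmono (α u) (β u)
    rw [real_inner_comm] at this
    linarith
  have := gronwall_aux hd hb (le_refl (‖α 0 - β 0‖ ^ 2)) t ht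
  rwa [gronwallBound_ε0, mul_comm] at this

lemma grad_decay (hmono : ∀ x y : E, ⟪g x - g y, x - y⟫ ≤ lam * ‖x - y‖ ^ 2)
    {α : ℝ → E}
    (hα : ∀ t ∈ Set.Ici (0:ℝ), HasDerivWithinAt α (g (α t)) (Set.Ici 0) t) :
    ∀ t ∈ Set.Ici (0:ℝ), ‖g (α t)‖ ^ 2 ≤ Real.exp (2 * lam * t) * ‖g (α 0)‖ ^ 2 := by
  intro t ht
  -- slope limits
  have hslope_t : Tendsto (fun h : ℝ => ‖slope α t (t + h)‖ ^ 2) (nhdsWithin 0 (Set.Ioi 0))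
      (nhds (‖g (α t)‖ ^ 2)) := by
    have h1 : Tendsto (slope α t) (nhdsWithin t (Set.Ici 0 \ {t})) (nhds (g (α t))) :=
      hasDerivWithinAt_iff_tendsto_slope.1 (hα t ht)
    have h2 : Tendsto (fun h : ℝ => t + h) (nhdsWithin 0 (Set.Ioi 0))
        (nhdsWithin t (Set.Ici 0 \ {t})) := by
      apply tendsto_nhdsWithin_of_tendsto_nhds_of_eventually_within
      · exact ((continuous_const.add continuous_id).tendsto' 0 t (by simp)).mono_left
          nhdsWithin_le_nhds
      · filter_upwards [self_mem_nhdsWithin] with h (hh : 0 < h)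
        exact ⟨add_nonneg ht hh.le, fun hmem => absurd (by simpa using hmem) hh.ne'⟩
    exact ((h1.comp h2).norm.pow 2)
  have hslope_0 : Tendsto (fun h : ℝ => Real.exp (2 * lam * t) * ‖slope α 0 h‖ ^ 2)
      (nhdsWithin 0 (Set.Ioi 0)) (nhds (Real.exp (2 * lam * t) * ‖g (α 0)‖ ^ 2)) := by
    have h1 : Tendsto (slope α 0) (nhdsWithin 0 (Set.Ici 0 \ {0})) (nhds (g (α 0))) :=
      hasDerivWithinAt_iff_tendsto_slope.1 (hα 0 Set.self_mem_Ici)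
    have h2 : Tendsto (slope α 0) (nhdsWithin 0 (Set.Ioi 0)) (nhds (g (α 0))) :=
      h1.mono_left (nhdsWithin_mono 0 (fun z (hz : 0 < z) => ⟨le_of_lt hz, ne_of_gt hz⟩))
    exact (h2.norm.pow 2).const_mul _
  refine le_of_tendsto_of_tendsto hslope_t hslope_0 ?_
  filter_upwards [self_mem_nhdsWithin] with h (hh : 0 < h)
  -- the shifted curve
  have hcs := curve_shift (g := g) hα (le_of_lt hh)
  have hst := same_time hmono hcs hα t ht
  simp only [zero_add] at hst
  have e1 : slope α t (t + h) = h⁻¹ • (α (t + h) - α t) := by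
    rw [slope_def_module]; simp
  have e2 : slope α 0 h = h⁻¹ • (α h - α 0) := by
    rw [slope_def_module]; simp
  rw [e1, e2, norm_smul, norm_smul, mul_pow, mul_pow]
  have hb : ‖(h⁻¹ : ℝ)‖ ^ 2 = (h⁻¹) ^ 2 := by
    rw [Real.norm_eq_abs, sq_abs]
  rw [hb]
  have hnn : (0:ℝ) ≤ h⁻¹ ^ 2 := sq_nonneg _
  calc h⁻¹ ^ 2 * ‖α (t + h) - α t‖ ^ 2
      ≤ h⁻¹ ^ 2 * (Real.exp (2 * lam * t) * ‖α h - α 0‖ ^ 2) := by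
        apply mul_le_mul_of_nonneg_left _ hnn
        exact hst
    _ = Real.exp (2 * lam * t) * (h⁻¹ ^ 2 * ‖α h - α 0‖ ^ 2) := by ring

lemma f_bound (hconc : ConcaveOn ℝ Set.univ (fun x => f x - lam / 2 * ‖x‖ ^ 2))
    (hg : ∀ x, HasFDerivAt f (innerSL ℝ (g x)) x) {α : ℝ → E}
    (hα : ∀ t ∈ Set.Ici (0:ℝ), HasDerivWithinAt α (g (α t)) (Set.Ici 0) t) :
    ∀ t ∈ Set.Ici (0:ℝ), f (α t) ≤ f (α 0) + ‖g (α 0)‖ ^ 2 * thetaLam (2 * lam) t := by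
  have hmono := grad_mono hconc hg
  intro t ht
  set c := ‖g (α 0)‖ ^ 2 with hc
  have hd : ∀ u ∈ Set.Ici (0:ℝ), HasDerivWithinAt (fun r => f (α r) - c * thetaLam (2*lam) r)
      (‖g (α u)‖ ^ 2 - c * Real.exp (2 * lam * u)) (Set.Ici 0) u := by
    intro u hu
    have h1 : HasDerivWithinAt (fun r => f (α r)) (‖g (α u)‖ ^ 2) (Set.Ici 0) u := by
      have := (hg (α u)).comp_hasDerivWithinAt u (hα u hu)
      simpa [real_inner_self_eq_norm_sq, Function.comp_def] using this
    have h2 : HasDerivWithinAt (fun r => c * thetaLam (2*lam) r)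
        (c * Real.exp (2*lam*u)) (Set.Ici 0) u :=
      ((thetaLam_hasDerivAt (2*lam) u).const_mul c).hasDerivWithinAt
    exact h1.sub h2
  have hb : ∀ u ∈ Set.Ici (0:ℝ),
      ‖g (α u)‖ ^ 2 - c * Real.exp (2 * lam * u) ≤
        0 * (f (α u) - c * thetaLam (2*lam) u) + 0 := by
    intro u hu
    have := grad_decay hmono hα u hu
    simp only [zero_mul, zero_add]
    rw [hc]
    linarith
  have h0 : f (α 0) - c * thetaLam (2*lam) 0 ≤ f (α 0) := by
    simp [thetaLam_zero]
  have hfin := gronwall_aux hd hb h0 t ht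
  have h3 : gronwallBound (f (α 0)) 0 0 t = f (α 0) := by
    rw [gronwallBound_K0]; simp
  linarith

lemma dist_point (hconc : ConcaveOn ℝ Set.univ (fun x => f x - lam / 2 * ‖x‖ ^ 2))
    (hg : ∀ x, HasFDerivAt f (innerSL ℝ (g x)) x) {α : ℝ → E}
    (hα : ∀ t ∈ Set.Ici (0:ℝ), HasDerivWithinAt α (g (α t)) (Set.Ici 0) t) (q : E) :
    ∀ t ∈ Set.Ici (0:ℝ), ‖α t - q‖ ^ 2 ≤ ‖α 0 - q‖ ^ 2
      + (2 * f (α 0) - 2 * f q + lam * ‖α 0 - q‖ ^ 2) * thetaLam lam t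
      + ‖g (α 0)‖ ^ 2 * thetaLam lam t ^ 2 := by
  intro t ht
  set c := ‖g (α 0)‖ ^ 2 with hc
  set d := ‖α 0 - q‖ ^ 2 with hd0
  set B := 2 * f (α 0) - 2 * f q + lam * d with hB
  set v : ℝ → ℝ := fun r =>
    ‖α r - q‖ ^ 2 - (d + B * thetaLam lam r + c * thetaLam lam r ^ 2) with hv
  have hd : ∀ u ∈ Set.Ici (0:ℝ), HasDerivWithinAt v
      (2 * ⟪α u - q, g (α u)⟫ -
        (B * Real.exp (lam * u) + c * (2 * thetaLam lam u * Real.exp (lam * u))))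
      (Set.Ici 0) u := by
    intro u hu
    have h1 : HasDerivWithinAt (fun r => ‖α r - q‖ ^ 2)
        (2 * ⟪α u - q, g (α u)⟫) (Set.Ici 0) u :=
      ((hα u hu).sub_const q).norm_sq
    have hθ := thetaLam_hasDerivAt lam u
    have hsq : HasDerivAt (fun r => thetaLam lam r ^ 2)
        (2 * thetaLam lam u * Real.exp (lam*u)) u := by
      have := hθ.pow 2
      norm_num at this
      exact this
    have h2 : HasDerivAt (fun r => d + B * thetaLam lam r + c * thetaLam lam r ^ 2)
        (B * Real.exp (lam * u) + c * (2 * thetaLam lam u * Real.exp (lam * u))) u :=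
      ((hθ.const_mul B).const_add d).add (hsq.const_mul c)
    exact h1.sub h2.hasDerivWithinAt
  have hb : ∀ u ∈ Set.Ici (0:ℝ),
      2 * ⟪α u - q, g (α u)⟫ -
        (B * Real.exp (lam * u) + c * (2 * thetaLam lam u * Real.exp (lam * u)))
        ≤ lam * v u + 0 := by
    intro u hu
    have hA := first_order hconc hg (α u) q
    have hB2 := f_bound hconc hg hα u hu
    have hE1 : Real.exp (lam * u) = lam * thetaLam lam u + 1 := (lam_mul_theta lam u).symm
    have hE2 : thetaLam (2*lam) u = thetaLam lam u * (lam * thetaLam lam u + 2) / 2 :=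
      theta_two_lam lam u
    rw [hE2, ← hc] at hB2
    have hA' : ⟪α u - q, g (α u)⟫ ≤ f (α u) - f q + lam / 2 * ‖α u - q‖ ^ 2 := by
      have e2 : ⟪g (α u), q - α u⟫ = -⟪α u - q, g (α u)⟫ := by
        rw [show q - α u = -(α u - q) from (neg_sub _ _).symm, inner_neg_right, real_inner_comm]
      have e3 : ‖q - α u‖ = ‖α u - q‖ := norm_sub_rev _ _
      rw [e2, e3] at hA
      linarith
    rw [hE1]
    simp only [hv, zero_add]
    nlinarith [hA', hB2, hB]
  have h0 : v 0 ≤ 0 := by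
    simp [hv, thetaLam_zero, hd0]
  have hfin := gronwall_aux hd hb h0 t ht
  rw [gronwallBound_ε0, zero_mul] at hfin
  have : v t ≤ 0 := hfin
  simp only [hv] at this
  linarith

end

/-- Distance estimate between two gradient curves of a λ-concave function at different
times (linear model of Lemma 2.4 (iii)). -/
theorem gradient_curves_dist_est_two_times
    {E : Type*} [NormedAddCommGroup E] [InnerProductSpace ℝ E]
    (lam : ℝ) (f : E → ℝ) (g : E → E)
    (hconc : ConcaveOn ℝ Set.univ (fun x => f x - lam / 2 * ‖x‖ ^ 2))
    (hg : ∀ x, HasFDerivAt f (innerSL ℝ (g x)) x) (hgc : Continuous g)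
    (α β : ℝ → E)
    (hα : ∀ t ∈ Set.Ici (0 : ℝ), HasDerivWithinAt α (g (α t)) (Set.Ici 0) t)
    (hβ : ∀ t ∈ Set.Ici (0 : ℝ), HasDerivWithinAt β (g (β t)) (Set.Ici 0) t)
    (p q : E) (hp : α 0 = p) (hq : β 0 = q) :
    ∀ tp tq : ℝ, 0 ≤ tq → tq ≤ tp →
      ‖α tp - β tq‖ ^ 2 ≤ Real.exp (2 * lam * tq) *
        (‖p - q‖ ^ 2
          + (2 * f p - 2 * f q + lam * ‖p - q‖ ^ 2) * thetaLam lam (tp - tq)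
          + ‖g p‖ ^ 2 * (thetaLam lam (tp - tq)) ^ 2) := by
  intro tp tq htq htpq
  have hmono := grad_mono hconc hg
  set s := tp - tq with hs
  have hs0 : 0 ≤ s := sub_nonneg.mpr htpq
  have hαs := curve_shift (g := g) hα hs0
  have step1 := same_time hmono hαs hβ tq htq
  have h1 : tq + s = tp := by rw [hs]; ring
  rw [h1, zero_add, hq] at step1
  have step2 := dist_point hconc hg hα q s hs0
  rw [hp] at step2
  have hexp : (0:ℝ) ≤ Real.exp (2 * lam * tq) := (Real.exp_pos _).le
  calc ‖α tp - β tq‖ ^ 2 ≤ Real.exp (2 * lam * tq) * ‖α s - q‖ ^ 2 := step1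
    _ ≤ Real.exp (2 * lam * tq) *
        (‖p - q‖ ^ 2 + (2 * f p - 2 * f q + lam * ‖p - q‖ ^ 2) * thetaLam lam s
          + ‖g p‖ ^ 2 * thetaLam lam s ^ 2) := by
        exact mul_le_mul_of_nonneg_left step2 hexp
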